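/- For natural numbers F, G, M with 2F + G ≤ M, the ratio C(M-2F, G)/C(M-F, G) is strictly less than exp(-FG/M). -/

import Mathlib

theorem stmt1 (F G M : ℕ) (hF : 0 < F) (hG : 0 < G) (h : 2 * F + G ≤ M) :
    ((M - 2 * F).choose G : ℝ) / ((M - F).choose G : ℝ) < Real.exp (-(F * G : ℝ) / M) := by
  set a := M - 2 * F with ha
  set b := M - F with hb
  have hMpos : 0 < M := lt_of_lt_of_le (by omega) h
  have hGa : G ≤ a := by omega
  have hab : a + F = b := by omega
  have hbM : b ≤ M := by omega
  -- express choose ratio as product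
  have hcast : ∀ n : ℕ, G ≤ n → (n.choose G : ℝ) = (∏ j ∈ Finset.range G, ((n - j : ℕ) : ℝ)) / ((G.factorial) : ℝ) := by
    intro n hn
    have h1 : n.descFactorial G = G.factorial * n.choose G := Nat.descFactorial_eq_factorial_mul_choose n G
    have h2 : n.descFactorial G = ∏ j ∈ Finset.range G, (n - j) := Nat.descFactorial_eq_prod_range n G
    have hfac : ((G.factorial) : ℝ) ≠ 0 := Nat.cast_ne_zero.mpr (G.factorial_ne_zero)
    field_simp
    rw [← Nat.cast_prod, ← h2, h1]
    push_cast
    ring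
  have hGb : G ≤ b := le_trans hGa (by omega)
  rw [hcast a hGa, hcast b hGb]
  have hfac : (0:ℝ) < ((G.factorial) : ℝ) := by positivity
  have hbprod : (0:ℝ) < ∏ j ∈ Finset.range G, ((b - j : ℕ) : ℝ) := by
    apply Finset.prod_pos
    intro j hj
    simp only [Finset.mem_range] at hj
    have : 0 < b - j := by omega
    exact_mod_cast this
  rw [show ((∏ j ∈ Finset.range G, ((a - j : ℕ) : ℝ)) / ((G.factorial):ℝ)) / ((∏ j ∈ Finset.range G, ((b - j : ℕ) : ℝ)) / ((G.factorial):ℝ)) = (∏ j ∈ Finset.range G, ((a - j : ℕ) : ℝ)) / (∏ j ∈ Finset.range G, ((b - j : ℕ) : ℝ)) from by rw [div_div_div_cancel_right₀]; exact ne_of_gt hfac]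
  rw [← Finset.prod_div_distrib]
  have key : ∏ j ∈ Finset.range G, (((a - j : ℕ) : ℝ) / ((b - j : ℕ) : ℝ)) <
      ∏ j ∈ Finset.range G, Real.exp (-(F : ℝ) / M) := by
    apply Finset.prod_lt_prod_of_nonempty
    · intro j hj
      simp only [Finset.mem_range] at hj
      have h1 : 0 < a - j := by omega
      have h2 : 0 < b - j := by omega
      have h1' : (0:ℝ) < ((a - j : ℕ) : ℝ) := by exact_mod_cast h1
      have h2' : (0:ℝ) < ((b - j : ℕ) : ℝ) := by exact_mod_cast h2
      positivity
    · intro j hj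
      simp only [Finset.mem_range] at hj
      have hja : j ≤ a := le_of_lt (lt_of_lt_of_le hj hGa)
      have hjb : j < b := by omega
      have hbj : (0:ℝ) < (b:ℝ) - j := by
        have : (j:ℝ) < b := by exact_mod_cast hjb
        linarith
      have hcast1 : ((a - j : ℕ) : ℝ) = (a:ℝ) - j := by
        push_cast [Nat.cast_sub hja]; ring
      have hcast2 : ((b - j : ℕ) : ℝ) = (b:ℝ) - j := by
        push_cast [Nat.cast_sub (le_of_lt hjb)]; ring
      rw [hcast1, hcast2]
      have habR : (a:ℝ) = (b:ℝ) - F := by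
        have : (a:ℝ) + F = b := by exact_mod_cast hab
        linarith
      have hFpos : (0:ℝ) < F := by exact_mod_cast hF
      have step1 : ((a:ℝ) - j) / ((b:ℝ) - j) = 1 - (F:ℝ) / ((b:ℝ) - j) := by
        field_simp [habR]
        linarith
      rw [step1]
      have hxne : -((F:ℝ) / ((b:ℝ) - j)) ≠ 0 := by
        have : (0:ℝ) < (F:ℝ) / ((b:ℝ) - j) := div_pos hFpos hbj
        linarith
      have step2 : 1 - (F:ℝ) / ((b:ℝ) - j) < Real.exp (-((F:ℝ) / ((b:ℝ) - j))) := by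
        have := Real.add_one_lt_exp hxne
        linarith
      refine step2.trans_le (Real.exp_le_exp.mpr ?_)
      rw [neg_div, neg_le_neg_iff]
      apply div_le_div_of_nonneg_left (le_of_lt hFpos) hbj
      have : (b:ℝ) ≤ M := by exact_mod_cast hbM
      have : (0:ℝ) ≤ j := by positivity
      linarith
    · exact Finset.nonempty_range_iff.mpr (by omega)
  refine key.trans_le ?_
  rw [Finset.prod_const, ← Real.exp_nat_mul]
  apply le_of_eq
  rw [Real.exp_eq_exp]
  have hMne : (M:ℝ) ≠ 0 := by exact_mod_cast hMpos.ne'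
  field_simp
  simp [Finset.card_range]
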